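/- Let G be a connected chordal graph that is not complete and let C be a maximal clique of G. Then C is a boundary clique if and only if the subgraph of G induced by the union of the remaining maximal cliques is a chordal graph whose set of maximal cliques is exactly C(G) \ {C}. -/

import Mathlib

namespace Chordal

variable {V : Type*} [Fintype V]

/-- A closed walk has a chord: an edge of `G` joining two support vertices that is
not an edge of the walk. -/
def HasChord (G : SimpleGraph V) {u : V} (c : G.Walk u u) : Prop :=
  ∃ v w, v ∈ c.support ∧ w ∈ c.support ∧ G.Adj v w ∧ s(v, w) ∉ c.edges

/-- A graph is chordal if every cycle of length at least 4 has a chord. -/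
def IsChordal (G : SimpleGraph V) : Prop :=
  ∀ ⦃u : V⦄ (c : G.Walk u u), c.IsCycle → 4 ≤ c.length → HasChord G c

/-- A maximal clique of `G`. -/
def IsMaxClique (G : SimpleGraph V) (s : Set V) : Prop :=
  G.IsClique s ∧ ∀ t : Set V, G.IsClique t → s ⊆ t → s = t

/-- A maximal clique of the induced subgraph `G(W)`. -/
def IsMaxCliqueOn (G : SimpleGraph V) (W s : Set V) : Prop :=
  s ⊆ W ∧ G.IsClique s ∧ ∀ t : Set V, t ⊆ W → G.IsClique t → s ⊆ t → s = t

/-- There is a walk from `u` to `w` staying inside `W` and avoiding `S`. -/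
def ReachWithin (G : SimpleGraph V) (W S : Set V) (u w : V) : Prop :=
  ∃ p : G.Walk u w, ∀ x ∈ p.support, x ∈ W ∧ x ∉ S

/-- `S` separates `u` from `w` in the induced subgraph `G(W)`. -/
def SeparatesOn (G : SimpleGraph V) (W S : Set V) (u w : V) : Prop :=
  u ∈ W ∧ w ∈ W ∧ u ∉ S ∧ w ∉ S ∧ u ≠ w ∧ ¬ ReachWithin G W S u w

/-- `S` is a minimal vertex separator of the induced subgraph `G(W)`:
for some pair `u, w` it is an inclusion-minimal set separating `u` from `w`. -/
def IsMinSeparatorOn (G : SimpleGraph V) (W S : Set V) : Prop :=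
  S ⊆ W ∧ ∃ u w, SeparatesOn G W S u w ∧ ∀ S' ⊂ S, ¬ SeparatesOn G W S' u w

/-- `S` is a minimal vertex separator of `G`. -/
def IsMinSeparator (G : SimpleGraph V) (S : Set V) : Prop :=
  IsMinSeparatorOn G Set.univ S

/-- `S` is inclusion-minimal among the minimal vertex separators of `G`. -/
def IsInclMinSeparator (G : SimpleGraph V) (S : Set V) : Prop :=
  IsMinSeparator G S ∧ ∀ S' : Set V, IsMinSeparator G S' → S' ⊆ S → S' = S

/-- `Γ` is a connected component of `G(V \ S)`. -/
def IsCompOutside (G : SimpleGraph V) (S Γ : Set V) : Prop :=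
  ∃ u, u ∉ S ∧ Γ = {w | ReachWithin G Set.univ S u w}

/-- A vertex is simplicial if its neighborhood is a clique. -/
def IsSimplicial (G : SimpleGraph V) (v : V) : Prop :=
  G.IsClique (G.neighborSet v)

/-- The simplicial component of a clique `C`: the simplicial vertices of `G` in `C`. -/
def Simp (G : SimpleGraph V) (C : Set V) : Set V :=
  {v ∈ C | IsSimplicial G v}

/-- The non-simplicial component of a clique `C`. -/
def Sep (G : SimpleGraph V) (C : Set V) : Set V :=
  C \ Simp G C

/-- `C` is a boundary clique (simply separated clique): a maximal clique such that
`Sep C = C ∩ C'` for some other maximal clique `C'`. -/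
def IsBoundaryClique (G : SimpleGraph V) (C : Set V) : Prop :=
  IsMaxClique G C ∧ ∃ C' : Set V, IsMaxClique G C' ∧ C' ≠ C ∧ Sep G C = C ∩ C'

/-- The induced subgraph on `W`, kept on the same vertex type. -/
def restrictS (G : SimpleGraph V) (W : Set V) : SimpleGraph V where
  Adj u v := G.Adj u v ∧ u ∈ W ∧ v ∈ W
  symm := ⟨fun u v ⟨h, hu, hv⟩ => ⟨h.symm, hv, hu⟩⟩
  loopless := ⟨fun u ⟨h, _, _⟩ => G.irrefl h⟩

/-- The vertex subset `A` induces a connected subgraph of `T`. -/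
def ConnOn {α : Type*} (T : SimpleGraph α) (A : Set α) : Prop :=
  A.Nonempty ∧ ∀ u ∈ A, ∀ v ∈ A, ∃ p : T.Walk u v, ∀ x ∈ p.support, x ∈ A

/-- The induced subgraph `G(W)` is complete. -/
def CompleteOn (G : SimpleGraph V) (W : Set V) : Prop :=
  ∀ u ∈ W, ∀ v ∈ W, u ≠ v → G.Adj u v

/-- A clique tree of `G`: a tree on the maximal cliques of `G` satisfying the
junction property. -/
def IsCliqueTree (G : SimpleGraph V) (T : SimpleGraph {s : Set V // IsMaxClique G s}) : Prop :=
  T.IsTree ∧ ∀ (C₁ C₂ : {s : Set V // IsMaxClique G s}) (p : T.Walk C₁ C₂), p.IsPath →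
    ∀ C₃ ∈ p.support, C₁.val ∩ C₂.val ⊆ C₃.val

/-- A leaf (endpoint) of a graph: a vertex with exactly one neighbor. -/
def IsLeaf {α : Type*} (T : SimpleGraph α) (a : α) : Prop :=
  ∃! b, T.Adj a b

/-- The union of the cliques preceding position `k` in a sequence. -/
def prefUnion {K : ℕ} (f : Fin K → Set V) (k : Fin K) : Set V :=
  {v | ∃ j, j < k ∧ v ∈ f j}

/-- A perfect sequence of the maximal cliques of the induced subgraph `G(W)`:
an enumeration of the maximal cliques of `G(W)` with the running intersection property. -/
def IsPerfectSeqOn (G : SimpleGraph V) (W : Set V) {K : ℕ} (f : Fin K → Set V) : Prop :=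
  Function.Injective f ∧ (∀ s : Set V, IsMaxCliqueOn G W s ↔ ∃ k, f k = s) ∧
  ∀ k : Fin K, 0 < (k : ℕ) →
    G.IsClique (prefUnion f k ∩ f k) ∧ ∃ k' : Fin K, k' < k ∧ prefUnion f k ∩ f k ⊆ f k'

/-- A perfect sequence of the maximal cliques of `G`. -/
def IsPerfectSeq (G : SimpleGraph V) {K : ℕ} (f : Fin K → Set V) : Prop :=
  Function.Injective f ∧ (∀ s : Set V, IsMaxClique G s ↔ ∃ k, f k = s) ∧
  ∀ k : Fin K, 0 < (k : ℕ) →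
    G.IsClique (prefUnion f k ∩ f k) ∧ ∃ k' : Fin K, k' < k ∧ prefUnion f k ∩ f k ⊆ f k'

/-- The closed neighborhood of a vertex. -/
def closedNbhd (G : SimpleGraph V) (v : V) : Set V :=
  insert v (G.neighborSet v)


section Helpers

variable {V : Type*} [Fintype V] {G : SimpleGraph V}

lemma clique_pair {a b : V} (h : G.Adj a b) : G.IsClique {a, b} :=
  SimpleGraph.isClique_pair.mpr fun _ => h

lemma exists_maxCliqueOn_superset {W s : Set V} (hsW : s ⊆ W) (hs : G.IsClique s) :
    ∃ t, IsMaxCliqueOn G W t ∧ s ⊆ t := by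
  obtain ⟨t, ⟨htW, htc, hst⟩, hmax⟩ :=
    Set.Finite.exists_maximalFor id {t : Set V | t ⊆ W ∧ G.IsClique t ∧ s ⊆ t}
      (Set.toFinite _) ⟨s, hsW, hs, subset_rfl⟩
  refine ⟨t, ⟨htW, htc, fun t' ht'W ht'c htt' => ?_⟩, hst⟩
  exact le_antisymm htt' (hmax ⟨ht'W, ht'c, hst.trans htt'⟩ htt')

lemma exists_maxClique_superset {s : Set V} (hs : G.IsClique s) :
    ∃ t, IsMaxClique G t ∧ s ⊆ t := by
  obtain ⟨t, ⟨htc, hst⟩, hmax⟩ :=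
    Set.Finite.exists_maximalFor id {t : Set V | G.IsClique t ∧ s ⊆ t}
      (Set.toFinite _) ⟨s, hs, subset_rfl⟩
  exact ⟨t, ⟨htc, fun t' ht'c htt' => le_antisymm htt' (hmax ⟨ht'c, hst.trans htt'⟩ htt')⟩, hst⟩

lemma mem_maxClique (v : V) : ∃ t, IsMaxClique G t ∧ v ∈ t := by
  obtain ⟨t, ht, hsub⟩ := exists_maxClique_superset (G := G) (s := {v})
    (Set.pairwise_singleton v G.Adj)
  exact ⟨t, ht, hsub rfl⟩

lemma closedNbhd_clique {v : V} (h : IsSimplicial G v) : G.IsClique (closedNbhd G v) := by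
  rw [closedNbhd, SimpleGraph.isClique_insert]
  exact ⟨h, fun b hb _ => hb⟩

lemma maxClique_eq_closedNbhd {C : Set V} (hC : IsMaxClique G C) {v : V} (hv : v ∈ C)
    (h : IsSimplicial G v) : C = closedNbhd G v := by
  refine hC.2 _ (closedNbhd_clique h) fun u hu => ?_
  rcases eq_or_ne u v with rfl | hne
  · exact Set.mem_insert _ _
  · exact Set.mem_insert_of_mem _ ((SimpleGraph.mem_neighborSet G v u).mpr (hC.1 hv hu hne.symm))

end Helpers

section Restrict

variable {V : Type*} [Fintype V] {G : SimpleGraph V} {W : Set V}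

lemma restrictS_le : restrictS G W ≤ G := fun _ _ h => h.1

lemma support_restrict_mem {a b : V} (p : (restrictS G W).Walk a b) :
    ∀ x ∈ p.support, x ∈ W ∨ x = b := by
  induction p with
  | nil => simp
  | cons h q ih =>
    intro x hx
    rw [SimpleGraph.Walk.support_cons, List.mem_cons] at hx
    rcases hx with rfl | hx
    · exact Or.inl h.2.1
    · exact ih x hx

lemma isChordal_restrictS (hch : IsChordal G) (W : Set V) : IsChordal (restrictS G W) := by
  intro u c hc hl
  have hedges : ∀ e ∈ c.edges, e ∈ G.edgeSet := fun e he =>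
    SimpleGraph.edgeSet_mono restrictS_le (c.edges_subset_edgeSet he)
  obtain ⟨v, w, hv, hw, hadj, hne⟩ := hch (c.transfer G hedges) (hc.transfer hedges)
    (by rwa [SimpleGraph.Walk.length_transfer])
  rw [SimpleGraph.Walk.support_transfer] at hv hw
  rw [SimpleGraph.Walk.edges_transfer] at hne
  have hu : u ∈ W := by
    cases c with
    | nil => simp at hl
    | cons h q => exact h.2.1
  have hvW : v ∈ W := by rcases support_restrict_mem c v hv with h | rfl <;> [exact h; exact hu]
  have hwW : w ∈ W := by rcases support_restrict_mem c w hw with h | rfl <;> [exact h; exact hu]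
  exact ⟨v, w, hv, hw, ⟨hadj, hvW, hwW⟩, hne⟩

end Restrict


theorem boundary_iff_removal_chordal_with_cliques {V : Type*} [Fintype V]
    (G : SimpleGraph V) (hconn : G.Connected) (hch : IsChordal G)
    (hnc : ¬ CompleteOn G Set.univ) (C : Set V) (hC : IsMaxClique G C)
    (W : Set V) (hW : W = {v | ∃ s : Set V, IsMaxClique G s ∧ s ≠ C ∧ v ∈ s}) :
    IsBoundaryClique G C ↔
      (IsChordal (restrictS G W) ∧
        ∀ s : Set V, IsMaxCliqueOn G W s ↔ (IsMaxClique G s ∧ s ≠ C)) := by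
  have hWmem : ∀ v : V, v ∈ W ↔ ∃ s : Set V, IsMaxClique G s ∧ s ≠ C ∧ v ∈ s := by
    intro v; rw [hW]; exact Iff.rfl
  have hsubW : ∀ s : Set V, IsMaxClique G s → s ≠ C → s ⊆ W :=
    fun s hs hne v hv => (hWmem v).2 ⟨s, hs, hne, hv⟩
  have hsep : Sep G C = C ∩ W := by
    ext v
    simp only [Sep, Simp, Set.mem_diff, Set.mem_setOf_eq, Set.mem_inter_iff]
    constructor
    · rintro ⟨hvC, hns⟩
      refine ⟨hvC, ?_⟩
      have hnbc : ¬ G.IsClique (G.neighborSet v) := fun h => hns ⟨hvC, h⟩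
      rw [SimpleGraph.isClique_iff, Set.Pairwise] at hnbc
      push_neg at hnbc
      obtain ⟨a, ha, b, hb, hab, hnadj⟩ := hnbc
      have hex : ∃ u, G.Adj v u ∧ u ∉ C := by
        by_cases haC : a ∈ C
        · by_cases hbC : b ∈ C
          · exact absurd (hC.1 haC hbC hab) hnadj
          · exact ⟨b, hb, hbC⟩
        · exact ⟨a, ha, haC⟩
      obtain ⟨u, hvu, huC⟩ := hex
      obtain ⟨t, ht, hsub⟩ := exists_maxClique_superset (clique_pair hvu)
      refine (hWmem v).2 ⟨t, ht, ?_, hsub (Set.mem_insert _ _)⟩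
      rintro rfl
      exact huC (hsub (Set.mem_insert_of_mem _ rfl))
    · rintro ⟨hvC, hvW⟩
      refine ⟨hvC, ?_⟩
      rintro ⟨-, hsimp⟩
      obtain ⟨t, ht, htne, hvt⟩ := (hWmem v).1 hvW
      exact htne ((maxClique_eq_closedNbhd ht hvt hsimp).trans
        (maxClique_eq_closedNbhd hC hvC hsimp).symm)
  constructor
  · rintro ⟨-, C', hC', hCne, hSepEq⟩
    have hnotsub : ¬ C ⊆ C' := fun h => hCne (hC.2 C' hC'.1 h).symm
    obtain ⟨v₀, hv₀C, hv₀C'⟩ := Set.not_subset.mp hnotsub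
    have hv₀W : v₀ ∉ W := by
      intro h
      have hmem : v₀ ∈ Sep G C := by rw [hsep]; exact ⟨hv₀C, h⟩
      rw [hSepEq] at hmem; exact hv₀C' hmem.2
    refine ⟨isChordal_restrictS hch W, ?_⟩
    intro s
    constructor
    · rintro ⟨hsW, hscl, hsmax⟩
      have hsne : s ≠ C := by rintro rfl; exact hv₀W (hsW hv₀C)
      obtain ⟨t, ht, hst⟩ := exists_maxClique_superset hscl
      rcases eq_or_ne t C with heq | htne
      · have hsC' : s ⊆ C' := by
          intro x hx
          have hmem : x ∈ Sep G C := by rw [hsep]; exact ⟨heq ▸ hst hx, hsW hx⟩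
          rw [hSepEq] at hmem; exact hmem.2
        have hs' : s = C' := hsmax C' (hsubW C' hC' hCne) hC'.1 hsC'
        rw [hs']; exact ⟨hC', hCne⟩
      · have hs' : s = t := hsmax t (hsubW t ht htne) ht.1 hst
        rw [hs']; exact ⟨ht, hs' ▸ hsne⟩
    · rintro ⟨hs, hsne⟩
      exact ⟨hsubW s hs hsne, hs.1, fun t _ htc hst => hs.2 t htc hst⟩
  · rintro ⟨-, hiff⟩
    obtain ⟨t, ht, hsub⟩ := exists_maxCliqueOn_superset Set.inter_subset_right
      (hC.1.subset Set.inter_subset_left)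
    obtain ⟨htmax, htne⟩ := (hiff t).1 ht
    refine ⟨hC, t, htmax, htne, ?_⟩
    rw [hsep]
    exact Set.Subset.antisymm (fun x hx => ⟨hx.1, hsub hx⟩) (fun x hx => ⟨hx.1, ht.1 hx.2⟩)

end Chordal
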